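/- Every fiber of the projection from the augmented boundary of a properly convex open domain to its boundary is a compact convex set; consequently the projection Π_Ag : Bd^Ag Ω → Bd Ω is a proper map with contractible fibers. -/

import Mathlib

open Bornology

/-- A nonzero continuous linear functional is not constant on a nonempty open set. -/
lemma aux_not_const {n : ℕ} {Ω : Set (EuclideanSpace ℝ (Fin (n + 1)))}
    (hopen : IsOpen Ω) (hne : Ω.Nonempty)
    {f : EuclideanSpace ℝ (Fin (n + 1)) →L[ℝ] ℝ} (hf : f ≠ 0) (c : ℝ)
    (h : ∀ y ∈ Ω, f y = c) : False := by
  obtain ⟨y, hy⟩ := hne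
  obtain ⟨v, hv⟩ : ∃ v, f v ≠ 0 := by
    by_contra hcon
    push_neg at hcon
    exact hf (ContinuousLinearMap.ext fun v => by simp [hcon v])
  have hvn : (0:ℝ) < ‖v‖ := by
    rw [norm_pos_iff]
    exact fun h0 => hv (by simp [h0])
  obtain ⟨r, hr, hball⟩ := Metric.isOpen_iff.1 hopen y hy
  set ε : ℝ := r / (2 * ‖v‖) with hεdef
  have hε : 0 < ε := by positivity
  have hmem : y + ε • v ∈ Ω := by
    apply hball
    rw [Metric.mem_ball, dist_eq_norm, add_sub_cancel_left, norm_smul,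
      Real.norm_eq_abs, abs_of_pos hε]
    have : ε * ‖v‖ = r / 2 := by
      field_simp [hεdef]
      rw [hεdef, div_mul_eq_mul_div, div_mul_eq_mul_div, div_eq_iff (by positivity)]
      ring
    rw [this]
    linarith
  have h1 := h _ hmem
  have h2 := h _ hy
  rw [map_add, map_smul, h2, smul_eq_mul] at h1
  have : ε * f v = 0 := by linarith
  rcases mul_eq_zero.1 this with h' | h'
  · exact absurd h' (ne_of_gt hε)
  · exact hv h'

/-- The convex combination of two unit supporting functionals is nonzero. -/
lemma aux_ne_zero {n : ℕ} {Ω : Set (EuclideanSpace ℝ (Fin (n + 1)))}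
    (hopen : IsOpen Ω) (hne : Ω.Nonempty)
    {x : EuclideanSpace ℝ (Fin (n + 1))}
    {f f₀ : EuclideanSpace ℝ (Fin (n + 1)) →L[ℝ] ℝ}
    (hfn : ‖f‖ = 1) (hfs : ∀ y ∈ Ω, f y ≤ f x)
    (hf₀n : ‖f₀‖ = 1) (hf₀s : ∀ y ∈ Ω, f₀ y ≤ f₀ x)
    {t : ℝ} (ht0 : 0 ≤ t) (ht1 : t ≤ 1) :
    (1 - t) • f + t • f₀ ≠ 0 := by
  intro h0
  rcases eq_or_lt_of_le ht0 with rfl | htpos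
  · simp only [sub_zero, one_smul, zero_smul, add_zero] at h0
    rw [h0] at hfn
    simp at hfn
  · have hf₀ne : f₀ ≠ 0 := fun h' => by rw [h'] at hf₀n; simp at hf₀n
    refine aux_not_const hopen hne hf₀ne (f₀ x) fun y hy => ?_
    have ex : (1 - t) * f x + t * f₀ x = 0 := by
      have := congrArg (fun g : EuclideanSpace ℝ (Fin (n + 1)) →L[ℝ] ℝ => g x) h0
      simpa [smul_eq_mul] using this
    have ey : (1 - t) * f y + t * f₀ y = 0 := by
      have := congrArg (fun g : EuclideanSpace ℝ (Fin (n + 1)) →L[ℝ] ℝ => g y) h0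
      simpa [smul_eq_mul] using this
    have h1 : (0:ℝ) ≤ (1 - t) * (f x - f y) :=
      mul_nonneg (by linarith) (by linarith [hfs y hy])
    have h2 : (0:ℝ) ≤ t * (f₀ x - f₀ y) :=
      mul_nonneg ht0 (by linarith [hf₀s y hy])
    have hsum : (1 - t) * (f x - f y) + t * (f₀ x - f₀ y) = 0 := by ring_nf; nlinarith [ex, ey]
    have : t * (f₀ x - f₀ y) = 0 := by linarith
    have := (mul_eq_zero.1 this).resolve_left (ne_of_gt htpos)
    linarith

lemma aux_norm_normalize {n : ℕ} (g : EuclideanSpace ℝ (Fin (n + 1)) →L[ℝ] ℝ)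
    (hng : ‖g‖ ≠ 0) : ‖‖g‖⁻¹ • g‖ = 1 := by
  rw [norm_smul (α := ℝ) (β := EuclideanSpace ℝ (Fin (n + 1)) →L[ℝ] ℝ),
    norm_inv, norm_norm, inv_mul_cancel₀ hng]

theorem augmented_boundary_fibers_and_properness
    {n : ℕ} (Ω : Set (EuclideanSpace ℝ (Fin (n + 1))))
    (hopen : IsOpen Ω) (hconv : Convex ℝ Ω) (hbdd : Bornology.IsBounded Ω)
    (hne : Ω.Nonempty) :
    (∀ x ∈ frontier Ω,
      IsCompact {f : EuclideanSpace ℝ (Fin (n + 1)) →L[ℝ] ℝ |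
          ‖f‖ = 1 ∧ ∀ y ∈ Ω, f y ≤ f x} ∧
      Convex ℝ {f : EuclideanSpace ℝ (Fin (n + 1)) →L[ℝ] ℝ | ∀ y ∈ Ω, f y ≤ f x} ∧
      ContractibleSpace ↥{f : EuclideanSpace ℝ (Fin (n + 1)) →L[ℝ] ℝ |
          ‖f‖ = 1 ∧ ∀ y ∈ Ω, f y ≤ f x}) ∧
    IsProperMap
      (fun p : {p : EuclideanSpace ℝ (Fin (n + 1)) ×
            (EuclideanSpace ℝ (Fin (n + 1)) →L[ℝ] ℝ) //
          p.1 ∈ frontier Ω ∧ ‖p.2‖ = 1 ∧ ∀ y ∈ Ω, p.2 y ≤ p.2 p.1} =>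
        p.val.1) := by
  constructor
  · intro x hx
    -- existence of a supporting unit functional at x
    have hxnot : x ∉ Ω := by
      rw [hopen.frontier_eq] at hx
      exact hx.2
    obtain ⟨g, hg⟩ := geometric_hahn_banach_open_point hconv hopen hxnot
    have hgne : g ≠ 0 := by
      intro h0
      obtain ⟨y, hy⟩ := hne
      have := hg y hy
      rw [h0] at this
      simp at this
    have hng : ‖g‖ ≠ 0 := norm_ne_zero_iff.2 hgne
    set f₀ : EuclideanSpace ℝ (Fin (n + 1)) →L[ℝ] ℝ := ‖g‖⁻¹ • g with hf₀def
    have hf₀norm : ‖f₀‖ = 1 := aux_norm_normalize g hng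
    have hf₀sup : ∀ y ∈ Ω, f₀ y ≤ f₀ x := fun y hy => by
      simp only [hf₀def, ContinuousLinearMap.smul_apply, smul_eq_mul]
      exact mul_le_mul_of_nonneg_left (le_of_lt (hg y hy))
        (inv_nonneg.2 (norm_nonneg _))
    refine ⟨?_, ?_, ?_⟩
    · -- compactness of the fiber
      apply Metric.isCompact_of_isClosed_isBounded
      · have heq : {f : EuclideanSpace ℝ (Fin (n + 1)) →L[ℝ] ℝ |
            ‖f‖ = 1 ∧ ∀ y ∈ Ω, f y ≤ f x}
            = {f | ‖f‖ = 1} ∩ ⋂ y ∈ Ω, {f | f y ≤ f x} := by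
          ext f
          simp [Set.mem_iInter]
        rw [heq]
        refine (isClosed_eq continuous_norm continuous_const).inter
          (isClosed_biInter fun y hy => isClosed_le ?_ ?_)
        · exact (ContinuousLinearMap.apply ℝ ℝ y).continuous
        · exact (ContinuousLinearMap.apply ℝ ℝ x).continuous
      · exact Metric.isBounded_sphere.subset fun f hf =>
          mem_sphere_zero_iff_norm.2 hf.1
    · -- convexity of the cone
      intro f hf g' hg' a b ha hb hab
      simp only [Set.mem_setOf_eq] at *
      intro y hy
      simp only [ContinuousLinearMap.add_apply, ContinuousLinearMap.smul_apply,
        smul_eq_mul]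
      exact add_le_add (mul_le_mul_of_nonneg_left (hf y hy) ha)
        (mul_le_mul_of_nonneg_left (hg' y hy) hb)
    · -- contractibility
      rw [contractible_iff_id_nullhomotopic]
      refine ⟨⟨f₀, hf₀norm, hf₀sup⟩, ⟨?_⟩⟩
      set S := {f : EuclideanSpace ℝ (Fin (n + 1)) →L[ℝ] ℝ |
          ‖f‖ = 1 ∧ ∀ y ∈ Ω, f y ≤ f x}
      set G : unitInterval × ↥S → (EuclideanSpace ℝ (Fin (n + 1)) →L[ℝ] ℝ) :=
        fun p => (1 - (p.1 : ℝ)) • (p.2 : EuclideanSpace ℝ (Fin (n + 1)) →L[ℝ] ℝ)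
            + (p.1 : ℝ) • f₀ with hGdef
      have hGcont : Continuous G := by
        apply Continuous.add
        · exact (continuous_const.sub
            (continuous_subtype_val.comp continuous_fst)).smul
            (continuous_subtype_val.comp continuous_snd)
        · exact (continuous_subtype_val.comp continuous_fst).smul continuous_const
      have hGne : ∀ p, G p ≠ 0 := fun p =>
        aux_ne_zero hopen hne p.2.2.1 p.2.2.2 hf₀norm hf₀sup p.1.2.1 p.1.2.2
      have hGnorm : ∀ p, ‖G p‖ ≠ 0 := fun p => norm_ne_zero_iff.2 (hGne p)
      have hmem : ∀ p, ‖G p‖⁻¹ • G p ∈ S := by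
        intro p
        constructor
        · exact aux_norm_normalize _ (hGnorm p)
        · intro y hy
          simp only [ContinuousLinearMap.smul_apply, smul_eq_mul]
          apply mul_le_mul_of_nonneg_left _ (inv_nonneg.2 (norm_nonneg _))
          simp only [hGdef, ContinuousLinearMap.add_apply,
            ContinuousLinearMap.smul_apply, smul_eq_mul]
          have h1 : (1 - (p.1 : ℝ)) * ((p.2 : EuclideanSpace ℝ (Fin (n + 1)) →L[ℝ] ℝ) y)
              ≤ (1 - (p.1 : ℝ)) * ((p.2 : EuclideanSpace ℝ (Fin (n + 1)) →L[ℝ] ℝ) x) :=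
            mul_le_mul_of_nonneg_left (p.2.2.2 y hy) (by linarith [p.1.2.2])
          have h2 : (p.1 : ℝ) * f₀ y ≤ (p.1 : ℝ) * f₀ x :=
            mul_le_mul_of_nonneg_left (hf₀sup y hy) p.1.2.1
          linarith
      exact {
        toContinuousMap := ⟨fun p => ⟨‖G p‖⁻¹ • G p, hmem p⟩, by
          apply Continuous.subtype_mk
          exact ((hGcont.norm).inv₀ hGnorm).smul hGcont⟩
        map_zero_left := fun f => by
          apply Subtype.ext
          have hG0 : G (0, f) = (f : EuclideanSpace ℝ (Fin (n + 1)) →L[ℝ] ℝ) := by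
            simp [hGdef]
          simp only [hG0, f.2.1]
          simp
        map_one_left := fun f => by
          apply Subtype.ext
          have hG1 : G (1, f) = f₀ := by
            simp [hGdef]
          simp only [ContinuousMap.const_apply, hG1, hf₀norm]
          simp }
  · -- properness
    have hK : IsCompact {p : EuclideanSpace ℝ (Fin (n + 1)) ×
        (EuclideanSpace ℝ (Fin (n + 1)) →L[ℝ] ℝ) |
        p.1 ∈ frontier Ω ∧ ‖p.2‖ = 1 ∧ ∀ y ∈ Ω, p.2 y ≤ p.2 p.1} := by
      apply Metric.isCompact_of_isClosed_isBounded
      · have heq : {p : EuclideanSpace ℝ (Fin (n + 1)) ×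
            (EuclideanSpace ℝ (Fin (n + 1)) →L[ℝ] ℝ) |
            p.1 ∈ frontier Ω ∧ ‖p.2‖ = 1 ∧ ∀ y ∈ Ω, p.2 y ≤ p.2 p.1}
            = {p | p.1 ∈ frontier Ω} ∩ ({p | ‖p.2‖ = 1}
              ∩ ⋂ y ∈ Ω, {p | p.2 y ≤ p.2 p.1}) := by
          ext p
          simp [Set.mem_iInter, and_assoc]
        rw [heq]
        refine (isClosed_frontier.preimage continuous_fst).inter
          (((isClosed_eq (continuous_norm.comp continuous_snd) continuous_const)).inter
            (isClosed_biInter fun y hy => isClosed_le ?_ ?_))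
        · exact (ContinuousLinearMap.apply ℝ ℝ y).continuous.comp continuous_snd
        · exact isBoundedBilinearMap_apply.continuous.comp
            (continuous_snd.prodMk continuous_fst)
      · refine ((hbdd.closure.subset frontier_subset_closure).prod
          (Metric.isBounded_sphere (x := (0 : EuclideanSpace ℝ (Fin (n + 1)) →L[ℝ] ℝ))
            (r := 1))).subset fun p hp => ?_
        exact Set.mem_prod.2 ⟨hp.1, mem_sphere_zero_iff_norm.2 hp.2.1⟩
    haveI : CompactSpace {p : EuclideanSpace ℝ (Fin (n + 1)) ×
        (EuclideanSpace ℝ (Fin (n + 1)) →L[ℝ] ℝ) //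
        p.1 ∈ frontier Ω ∧ ‖p.2‖ = 1 ∧ ∀ y ∈ Ω, p.2 y ≤ p.2 p.1} :=
      isCompact_iff_compactSpace.1 hK
    exact (continuous_fst.comp continuous_subtype_val).isProperMap
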